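/- Let ℐ be a fully invariant collection of Bruhat intervals. Then for all [u₁,v₁], [u₂,v₂] ∈ ℐ and all poset isomorphisms φ: [u₁,v₁] → [u₂,v₂], one has P_{y,y'} = P_{φ(y),φ(y')} for all y, y' ∈ [u₁,v₁]. -/

import Mathlib

open Polynomial

namespace KL

variable {B W : Type*} [Group W] {M : CoxeterMatrix B}

/-- Bruhat order on a Coxeter group: reflexive-transitive closure of right
multiplication by a reflection that increases length. -/
def BruhatLE (cs : CoxeterSystem M W) : W → W → Prop :=
  Relation.ReflTransGen (fun x y =>
    ∃ t, cs.IsReflection t ∧ y = x * t ∧ cs.length x < cs.length y)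

def BruhatLT (cs : CoxeterSystem M W) (x y : W) : Prop :=
  BruhatLE cs x y ∧ x ≠ y

/-- Covering relation of Bruhat order. -/
def BruhatCovBy (cs : CoxeterSystem M W) (x y : W) : Prop :=
  BruhatLT cs x y ∧ ∀ z, BruhatLT cs x z → BruhatLT cs z y → False

/-- The Bruhat interval `[u, v]`. -/
def BruhatInterval (cs : CoxeterSystem M W) (u v : W) : Set W :=
  {y | BruhatLE cs u y ∧ BruhatLE cs y v}

/-- The standard parabolic subgroup `W_J`. -/
def ParabolicSubgroup (cs : CoxeterSystem M W) (J : Set B) : Subgroup W :=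
  Subgroup.closure (cs.simple '' J)

/-- `w` is the minimal-length representative of its coset `w * W_J`,
i.e. `w ∈ Wᴶ`. -/
def IsMinRep (cs : CoxeterSystem M W) (J : Set B) (w : W) : Prop :=
  ∀ x ∈ ParabolicSubgroup cs J, cs.length w ≤ cs.length (w * x)

/-- The set `Aᴶ_{u,v}` of atoms of `[u,v]` lying in `Wᴶ`. -/
def AtomSet (cs : CoxeterSystem M W) (J : Set B) (u v : W) : Set W :=
  {a | IsMinRep cs J a ∧ BruhatCovBy cs u a ∧ BruhatLE cs a v}

/-- The parabolic quotient interval `[u,v]ᴶ = [u,v] ∩ Wᴶ`. -/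
def QuotInterval (cs : CoxeterSystem M W) (J : Set B) (u v : W) : Set W :=
  {y | IsMinRep cs J y ∧ BruhatLE cs u y ∧ BruhatLE cs y v}

/-- The family of ordinary Kazhdan–Lusztig `R`-polynomials, characterized by
its defining recursion. -/
def IsRFamily (cs : CoxeterSystem M W) (R : W → W → Polynomial ℤ) : Prop :=
  (∀ u v, ¬ BruhatLE cs u v → R u v = 0) ∧
  (∀ u, R u u = 1) ∧
  (∀ (i : B) (u v : W), cs.length (cs.simple i * v) < cs.length v →
    (cs.length (cs.simple i * u) < cs.length u →
      R u v = R (cs.simple i * u) (cs.simple i * v)) ∧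
    (cs.length u < cs.length (cs.simple i * u) →
      R u v = (X - 1) * R u (cs.simple i * v)
            + X * R (cs.simple i * u) (cs.simple i * v)))

/-- The family of ordinary Kazhdan–Lusztig polynomials `P_{u,v}`, characterized
by its defining properties, relative to a family `R` of `R`-polynomials. -/
def IsPFamily (cs : CoxeterSystem M W) (R P : W → W → Polynomial ℤ) : Prop :=
  (∀ u v, ¬ BruhatLE cs u v → P u v = 0) ∧
  (∀ u, P u u = 1) ∧
  (∀ u v, BruhatLT cs u v →
    2 * (P u v).natDegree + 1 ≤ cs.length v - cs.length u) ∧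
  (∀ u v, BruhatLE cs u v →
    (P u v).reflect (cs.length v - cs.length u) =
      ∑ᶠ σ ∈ BruhatInterval cs u v, R u σ * P σ v)

/-- The family of parabolic `R`-polynomials `R^{J,x}_{u,v}` of Deodhar,
characterized by its defining recursion. -/
def IsParaRFamily (cs : CoxeterSystem M W) (J : Set B) (x : Polynomial ℤ)
    (R : W → W → Polynomial ℤ) : Prop :=
  (∀ u v, IsMinRep cs J u → IsMinRep cs J v → ¬ BruhatLE cs u v → R u v = 0) ∧
  (∀ u, IsMinRep cs J u → R u u = 1) ∧
  (∀ (i : B) (u v : W), IsMinRep cs J u → IsMinRep cs J v →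
    cs.length (cs.simple i * v) < cs.length v →
    (cs.length (cs.simple i * u) < cs.length u →
      R u v = R (cs.simple i * u) (cs.simple i * v)) ∧
    (cs.length u < cs.length (cs.simple i * u) →
      IsMinRep cs J (cs.simple i * u) →
      R u v = (X - 1) * R u (cs.simple i * v)
            + X * R (cs.simple i * u) (cs.simple i * v)) ∧
    (cs.length u < cs.length (cs.simple i * u) →
      ¬ IsMinRep cs J (cs.simple i * u) →
      R u v = (X - 1 - x) * R u (cs.simple i * v)))

/-- The family of parabolic Kazhdan–Lusztig polynomials `P^{J,x}_{u,v}` of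
Deodhar, characterized by its defining properties, relative to a family `R`
of parabolic `R`-polynomials. -/
def IsParaPFamily (cs : CoxeterSystem M W) (J : Set B)
    (R P : W → W → Polynomial ℤ) : Prop :=
  (∀ u v, IsMinRep cs J u → IsMinRep cs J v → ¬ BruhatLE cs u v → P u v = 0) ∧
  (∀ u, IsMinRep cs J u → P u u = 1) ∧
  (∀ u v, IsMinRep cs J u → IsMinRep cs J v → BruhatLT cs u v →
    2 * (P u v).natDegree + 1 ≤ cs.length v - cs.length u) ∧
  (∀ u v, IsMinRep cs J u → IsMinRep cs J v → BruhatLE cs u v →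
    (P u v).reflect (cs.length v - cs.length u) =
      ∑ᶠ σ ∈ QuotInterval cs J u v, R u σ * P σ v)


universe u

variable {B₁ W₁ B₂ W₂ : Type*} [Group W₁] [Group W₂]
  {M₁ : CoxeterMatrix B₁} {M₂ : CoxeterMatrix B₂}

/-- A poset isomorphism between the Bruhat intervals `[u₁,v₁]` and `[u₂,v₂]`. -/
def IsIntervalIso (cs₁ : CoxeterSystem M₁ W₁) (cs₂ : CoxeterSystem M₂ W₂)
    (u₁ v₁ : W₁) (u₂ v₂ : W₂) (φ : W₁ → W₂) : Prop :=
  Set.BijOn φ (BruhatInterval cs₁ u₁ v₁) (BruhatInterval cs₂ u₂ v₂) ∧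
  ∀ y ∈ BruhatInterval cs₁ u₁ v₁, ∀ y' ∈ BruhatInterval cs₁ u₁ v₁,
    (BruhatLE cs₁ y y' ↔ BruhatLE cs₂ (φ y) (φ y'))

/-- A bundled Bruhat interval in a Coxeter group. -/
structure CoxInterval : Type (u + 1) where
  B : Type u
  W : Type u
  [grp : Group W]
  M : CoxeterMatrix B
  cs : CoxeterSystem M W
  u : W
  v : W
  le : BruhatLE cs u v

attribute [instance] CoxInterval.grp

/-- A collection of Bruhat intervals is upper `R`-invariant (relative to an
assignment `R` of the `R`-polynomials of each ambient Coxeter group). -/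
def UpperRInvariant (I : Set CoxInterval.{u})
    (R : ∀ i : CoxInterval.{u}, i.W → i.W → Polynomial ℤ) : Prop :=
  ∀ i₁ ∈ I, ∀ i₂ ∈ I, ∀ φ : i₁.W → i₂.W,
    IsIntervalIso i₁.cs i₂.cs i₁.u i₁.v i₂.u i₂.v φ →
    ∀ y ∈ BruhatInterval i₁.cs i₁.u i₁.v, R i₁ y i₁.v = R i₂ (φ y) i₂.v

/-- A collection of Bruhat intervals is upper `P`-invariant. -/
def UpperPInvariant (I : Set CoxInterval.{u})
    (P : ∀ i : CoxInterval.{u}, i.W → i.W → Polynomial ℤ) : Prop :=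
  ∀ i₁ ∈ I, ∀ i₂ ∈ I, ∀ φ : i₁.W → i₂.W,
    IsIntervalIso i₁.cs i₂.cs i₁.u i₁.v i₂.u i₂.v φ →
    ∀ y ∈ BruhatInterval i₁.cs i₁.u i₁.v, P i₁ y i₁.v = P i₂ (φ y) i₂.v

/-- A collection of Bruhat intervals is fully invariant. -/
def FullyInvariant (I : Set CoxInterval.{u})
    (R : ∀ i : CoxInterval.{u}, i.W → i.W → Polynomial ℤ) : Prop :=
  ∀ i₁ ∈ I, ∀ i₂ ∈ I, ∀ φ : i₁.W → i₂.W,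
    IsIntervalIso i₁.cs i₂.cs i₁.u i₁.v i₂.u i₂.v φ →
    ∀ y ∈ BruhatInterval i₁.cs i₁.u i₁.v, ∀ y' ∈ BruhatInterval i₁.cs i₁.u i₁.v,
      R i₁ y y' = R i₂ (φ y) (φ y')



/-! ### Auxiliary development -/

section Aux

open CoxeterSystem List

variable {B₀ W₀ : Type*} [Group W₀] {M₀ : CoxeterMatrix B₀} (cs : CoxeterSystem M₀ W₀)

lemma bruhatLE_refl (w : W₀) : BruhatLE cs w w := Relation.ReflTransGen.refl

lemma bruhatLE_trans {a b c : W₀} (h₁ : BruhatLE cs a b) (h₂ : BruhatLE cs b c) :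
    BruhatLE cs a c := Relation.ReflTransGen.trans h₁ h₂

lemma length_le_of_bruhatLE {a b : W₀} (h : BruhatLE cs a b) :
    cs.length a ≤ cs.length b := by
  induction h with
  | refl => exact le_rfl
  | tail _ hbc ih =>
      obtain ⟨t, _, rfl, hlt⟩ := hbc
      omega

lemma bruhat_step {x t : W₀} (ht : cs.IsReflection t)
    (h : cs.length x < cs.length (x * t)) : BruhatLE cs x (x * t) :=
  Relation.ReflTransGen.single ⟨t, ht, rfl, h⟩

lemma bruhat_step_left {x t : W₀} (ht : cs.IsReflection t)
    (h : cs.length x < cs.length (t * x)) : BruhatLE cs x (t * x) := by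
  have hx : t * x = x * (x⁻¹ * t * x) := by group
  have hr : cs.IsReflection (x⁻¹ * t * x) := by
    have := ht.conj x⁻¹
    simpa using this
  rw [hx] at h ⊢
  exact bruhat_step cs hr h

lemma bruhat_step_left_down {x t : W₀} (ht : cs.IsReflection t)
    (h : cs.length (t * x) < cs.length x) : BruhatLE cs (t * x) x := by
  have := bruhat_step_left cs ht (x := t * x) (by
    have : t * (t * x) = x := by rw [← mul_assoc, ht.mul_self, one_mul]
    rw [this]; exact h)
  rwa [← mul_assoc, ht.mul_self, one_mul] at this

lemma length_lt_of_bruhatLT {a b : W₀} (h : BruhatLT cs a b) :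
    cs.length a < cs.length b := by
  obtain ⟨hle, hne⟩ := h
  rcases (Relation.ReflTransGen.cases_tail hle) with rfl | ⟨c, hac, hcb⟩
  · exact absurd rfl hne
  · obtain ⟨t, _, rfl, hlt⟩ := hcb
    have := length_le_of_bruhatLE cs hac
    omega

lemma eq_one_of_bruhatLE_one {a : W₀} (h : BruhatLE cs a 1) : a = 1 := by
  have := length_le_of_bruhatLE cs h
  rw [cs.length_one] at this
  exact cs.length_eq_zero_iff.mp (Nat.le_zero.mp this)

end Aux

section StrongExchange

open CoxeterSystem List Classical

variable {B₀ W₀ : Type*} [Group W₀] {M₀ : CoxeterMatrix B₀} (cs : CoxeterSystem M₀ W₀)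

private noncomputable def refbit (i : B₀) : Equiv.Perm (W₀ × ZMod 2) :=
  Function.Involutive.toPerm
    (fun p => (cs.simple i * p.1 * cs.simple i,
      p.2 + if p.1 = cs.simple i then 1 else 0))
    (by
      rintro ⟨t, e⟩
      have h1 : cs.simple i * (cs.simple i * t * cs.simple i) * cs.simple i = t := by
        have := cs.simple_mul_simple_self i
        calc cs.simple i * (cs.simple i * t * cs.simple i) * cs.simple i
            = (cs.simple i * cs.simple i) * t * (cs.simple i * cs.simple i) := by group
          _ = t := by rw [this]; group
      have h2 : (cs.simple i * t * cs.simple i = cs.simple i) ↔ (t = cs.simple i) := by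
        constructor
        · intro h
          have : cs.simple i * (cs.simple i * t * cs.simple i) * cs.simple i
              = cs.simple i * cs.simple i * cs.simple i := by rw [h]
        
          rw [h1] at this
          rw [this, cs.simple_mul_simple_self i, one_mul]
        · intro h; rw [h, cs.simple_mul_simple_self i, one_mul]
      simp only
      refine Prod.ext h1 ?_
      by_cases h : t = cs.simple i
      · rw [if_pos h, if_pos (h2.mpr h)]
        show e + 1 + 1 = e
        have : (1 + 1 : ZMod 2) = 0 := by decide
        rw [add_assoc, this, add_zero]
      · rw [if_neg h, if_neg (fun hc => h (h2.mp hc))]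
        simp)

private lemma refbit_word_apply (ω : List B₀) (t : W₀) (e : ZMod 2) :
    (List.map (refbit cs) ω).prod (t, e) =
      (cs.wordProd ω * t * (cs.wordProd ω)⁻¹,
        e + ((cs.rightInvSeq ω).count t : ZMod 2)) := by
  induction ω with
  | nil => simp [refbit]
  | cons i ω ih =>
      rw [List.map_cons, List.prod_cons, Equiv.Perm.mul_apply, ih]
      have hris : cs.rightInvSeq (i :: ω)
          = ((cs.wordProd ω)⁻¹ * cs.simple i * cs.wordProd ω) :: cs.rightInvSeq ω := rfl
      have hcond : (cs.wordProd ω * t * (cs.wordProd ω)⁻¹ = cs.simple i)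
          ↔ ((cs.wordProd ω)⁻¹ * cs.simple i * cs.wordProd ω = t) := by
        constructor
        · intro h; rw [← h]; group
        · intro h; rw [← h]; group
      show ((cs.simple i * (cs.wordProd ω * t * (cs.wordProd ω)⁻¹) * cs.simple i),
          (e + _) + _) = _
      refine Prod.ext ?_ ?_
      · show cs.simple i * (cs.wordProd ω * t * (cs.wordProd ω)⁻¹) * cs.simple i
          = cs.wordProd (i :: ω) * t * (cs.wordProd (i :: ω))⁻¹
        rw [cs.wordProd_cons, mul_inv_rev, cs.inv_simple]
        group
      · show (e + ((cs.rightInvSeq ω).count t : ZMod 2))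
            + (if cs.wordProd ω * t * (cs.wordProd ω)⁻¹ = cs.simple i then 1 else 0)
          = e + (((cs.rightInvSeq (i :: ω)).count t : ZMod 2))
        rw [hris, List.count_cons]
        push_cast
        have hite : (if cs.wordProd ω * t * (cs.wordProd ω)⁻¹ = cs.simple i
              then (1 : ZMod 2) else 0)
            = (if ((cs.wordProd ω)⁻¹ * cs.simple i * cs.wordProd ω == t) = true
              then (1 : ZMod 2) else 0) := by
          by_cases h : (cs.wordProd ω)⁻¹ * cs.simple i * cs.wordProd ω = t
          · rw [if_pos (hcond.mpr h), if_pos (beq_iff_eq.mpr h)]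
          · rw [if_neg (fun hc => h (hcond.mp hc)),
              if_neg (fun hc => h (beq_iff_eq.mp hc))]
        rw [hite]
        ring

end StrongExchange

section Braid

open CoxeterSystem List

variable {B₀ W₀ : Type*} [Group W₀] {M₀ : CoxeterMatrix B₀} (cs : CoxeterSystem M₀ W₀)

private lemma drop_alternatingWord (i i' : B₀) :
    ∀ (j n : ℕ), List.drop j (CoxeterSystem.alternatingWord i i' n)
      = CoxeterSystem.alternatingWord i i' (n - j) := by
  intro j
  induction j with
  | zero => intro n; simp
  | succ j ih =>
      intro n
      cases n with
      | zero => simp [CoxeterSystem.alternatingWord]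
      | succ n =>
          rw [CoxeterSystem.alternatingWord_succ' i i' n, List.drop_succ_cons, ih n]
          congr 1
          omega

private lemma alt_two_mul_succ (i i' : B₀) (m : ℕ) :
    CoxeterSystem.alternatingWord i i' (2 * (m + 1))
      = i :: i' :: CoxeterSystem.alternatingWord i i' (2 * m) := by
  have h1 : 2 * (m + 1) = (2 * m + 1) + 1 := by ring
  rw [h1, CoxeterSystem.alternatingWord_succ' i i' (2 * m + 1),
    CoxeterSystem.alternatingWord_succ' i i' (2 * m)]
  have h2 : ¬ Even (2 * m + 1) := by simp [Nat.even_add_one]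
  have h3 : Even (2 * m) := even_two_mul m
  rw [if_neg h2, if_pos h3]

private lemma prod_map_refbit_alt (i i' : B₀) (m : ℕ) :
    (List.map (refbit cs) (CoxeterSystem.alternatingWord i i' (2 * m))).prod
      = (refbit cs i * refbit cs i') ^ m := by
  induction m with
  | zero => simp [CoxeterSystem.alternatingWord]
  | succ m ih =>
      rw [alt_two_mul_succ, List.map_cons, List.map_cons, List.prod_cons, List.prod_cons,
        ih, pow_succ']
      rw [mul_assoc]

/-- The key conjugation computation in the dihedral subgroup. -/
private lemma conj_alt (i i' : B₀) (K : ℕ) :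
    (cs.wordProd (CoxeterSystem.alternatingWord i i' K))⁻¹
        * cs.simple (if Even K then i' else i)
        * cs.wordProd (CoxeterSystem.alternatingWord i i' K)
      = ((cs.simple i * cs.simple i')⁻¹) ^ K * cs.simple i' := by
  have key : cs.simple (if Even K then i' else i)
      * cs.wordProd (CoxeterSystem.alternatingWord i i' K)
      = cs.wordProd (CoxeterSystem.alternatingWord i i' (K + 1)) := by
    rw [CoxeterSystem.alternatingWord_succ' i i' K, cs.wordProd_cons]
  rw [mul_assoc, key]
  set g := cs.simple i * cs.simple i' with hg
  set b := cs.simple i' with hb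
  have hbb : b * b = 1 := cs.simple_mul_simple_self i'
  have hbinv : b⁻¹ = b := by rw [hb, cs.inv_simple]
  have hconj : b * g * b⁻¹ = g⁻¹ := by
    rw [hbinv, hg, hb, mul_inv_rev, cs.inv_simple, cs.inv_simple]
    calc cs.simple i' * (cs.simple i * cs.simple i') * cs.simple i'
        = cs.simple i' * cs.simple i * (cs.simple i' * cs.simple i') := by group
      _ = cs.simple i' * cs.simple i := by rw [cs.simple_mul_simple_self i', mul_one]
  have hpow : ∀ p : ℕ, b * g ^ p = (g⁻¹) ^ p * b := by
    intro p
    have h := (conj_pow : (b * g * b⁻¹) ^ p = b * g ^ p * b⁻¹)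
    rw [hconj] at h
    rw [h, hbinv, mul_assoc (b * g ^ p), hbb, mul_one]
  rcases Nat.even_or_odd' K with ⟨p, hK | hK⟩
  · -- K = 2 * p
    have hev : Even K := by rw [hK]; exact even_two_mul p
    have hd : K / 2 = p := by omega
    have hd' : (K + 1) / 2 = p := by omega
    have hodd : ¬ Even (K + 1) := by rw [hK]; simp [Nat.even_add_one]
    rw [cs.prod_alternatingWord_eq_mul_pow, cs.prod_alternatingWord_eq_mul_pow,
      if_pos hev, if_neg hodd, hd, hd', ← hg, ← hb]
    rw [one_mul]
    calc (g ^ p)⁻¹ * (b * g ^ p)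
        = (g ^ p)⁻¹ * ((g⁻¹) ^ p * b) := by rw [hpow]
      _ = (g⁻¹) ^ K * b := by
          rw [← inv_pow, ← mul_assoc, ← pow_add]
          congr 2
          omega
  · -- K = 2 * p + 1
    have hodd : ¬ Even K := by rw [hK]; simp [Nat.even_add_one]
    have hev : Even (K + 1) := by rw [hK]; exact ⟨p + 1, by ring⟩
    have hd : K / 2 = p := by omega
    have hd' : (K + 1) / 2 = p + 1 := by omega
    rw [cs.prod_alternatingWord_eq_mul_pow, cs.prod_alternatingWord_eq_mul_pow,
      if_neg hodd, if_pos hev, hd, hd', ← hg, ← hb]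
    rw [one_mul, mul_inv_rev, hbinv]
    calc (g ^ p)⁻¹ * b * g ^ (p + 1)
        = (g ^ p)⁻¹ * (b * g ^ (p + 1)) := by rw [mul_assoc]
      _ = (g ^ p)⁻¹ * ((g⁻¹) ^ (p + 1) * b) := by rw [hpow]
      _ = (g⁻¹) ^ K * b := by
          rw [← inv_pow, ← mul_assoc, ← pow_add]
          congr 2
          omega

end Braid

section Eta

open CoxeterSystem List Classical

variable {B₀ W₀ : Type*} [Group W₀] {M₀ : CoxeterMatrix B₀} (cs : CoxeterSystem M₀ W₀)

private lemma getD_ris_alt (i i' : B₀) (n j : ℕ) (hj : j < n) :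
    (cs.rightInvSeq (CoxeterSystem.alternatingWord i i' n)).getD j 1
      = ((cs.simple i * cs.simple i')⁻¹) ^ (n - j - 1) * cs.simple i' := by
  rw [cs.getD_rightInvSeq]
  have hdrop : (CoxeterSystem.alternatingWord i i' n).drop (j + 1)
      = CoxeterSystem.alternatingWord i i' (n - j - 1) := by
    rw [drop_alternatingWord, Nat.sub_sub]
  have hdropj : (CoxeterSystem.alternatingWord i i' n).drop j
      = CoxeterSystem.alternatingWord i i' ((n - j - 1) + 1) := by
    rw [drop_alternatingWord]
    congr 1
    omega
  have hget : (CoxeterSystem.alternatingWord i i' n)[j]?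
      = some (if Even (n - j - 1) then i' else i) := by
    have h0 : (CoxeterSystem.alternatingWord i i' n)[j]?
        = ((CoxeterSystem.alternatingWord i i' n).drop j)[0]? := by
      rw [List.getElem?_drop]
      rfl
    rw [h0, hdropj, CoxeterSystem.alternatingWord_succ' i i' (n - j - 1)]
    rfl
  rw [hdrop, hget]
  have := conj_alt cs i i' (n - j - 1)
  simpa using this

private lemma refbit_liftable : M₀.IsLiftable (fun i => refbit cs i) := by
  intro i i'
  show (refbit cs i * refbit cs i') ^ M₀ i i' = 1
  have hrel : (cs.simple i * cs.simple i') ^ M₀ i i' = 1 := cs.simple_mul_simple_pow i i'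
  obtain ⟨m, hm⟩ : ∃ m, M₀ i i' = m := ⟨_, rfl⟩
  rw [hm] at hrel ⊢
  rcases Nat.eq_zero_or_pos m with h0 | hpos
  · rw [h0, pow_zero]
  · rw [← prod_map_refbit_alt]
    have hπ : cs.wordProd (CoxeterSystem.alternatingWord i i' (2 * m)) = 1 := by
      rw [cs.prod_alternatingWord_eq_mul_pow, if_pos (even_two_mul m), one_mul]
      have h2 : 2 * m / 2 = m := by omega
      rw [h2, hrel]
    have hginv : ((cs.simple i * cs.simple i')⁻¹) ^ m = 1 := by
      rw [inv_pow, hrel, inv_one]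
    have hlen : (cs.rightInvSeq (CoxeterSystem.alternatingWord i i' (2 * m))).length
        = 2 * m := by
      rw [cs.length_rightInvSeq]; simp
    have hpair : ∀ j, j < m →
        (cs.rightInvSeq (CoxeterSystem.alternatingWord i i' (2 * m))).getD (j + m) 1
          = (cs.rightInvSeq (CoxeterSystem.alternatingWord i i' (2 * m))).getD j 1 := by
      intro j hjm
      rw [getD_ris_alt cs i i' (2 * m) (j + m) (by omega),
        getD_ris_alt cs i i' (2 * m) j (by omega)]
      have h1 : 2 * m - j - 1 = (2 * m - (j + m) - 1) + m := by omega
      rw [h1, pow_add, hginv, mul_one]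
    have htd : (cs.rightInvSeq (CoxeterSystem.alternatingWord i i' (2 * m))).take m
        = (cs.rightInvSeq (CoxeterSystem.alternatingWord i i' (2 * m))).drop m := by
      apply List.ext_getElem
      · rw [List.length_take, List.length_drop, hlen]
        omega
      · intro j h1 h2
        have hj : j < m := by
          rw [List.length_take, hlen] at h1
          omega
        rw [List.getElem_take, List.getElem_drop]
        rw [← List.getD_eq_getElem _ 1 (by omega : j
              < (cs.rightInvSeq (CoxeterSystem.alternatingWord i i' (2 * m))).length),
          ← List.getD_eq_getElem _ 1 (by omega : m + j
              < (cs.rightInvSeq (CoxeterSystem.alternatingWord i i' (2 * m))).length)]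
        rw [add_comm m j]
        exact (hpair j hj).symm
    have hcount : ∀ t : W₀,
        ((List.count t (cs.rightInvSeq (CoxeterSystem.alternatingWord i i' (2 * m)))
          : ZMod 2)) = 0 := by
      intro t
      have h2c : List.count t (cs.rightInvSeq (CoxeterSystem.alternatingWord i i' (2 * m)))
          = 2 * List.count t
              ((cs.rightInvSeq (CoxeterSystem.alternatingWord i i' (2 * m))).take m) := by
        conv_lhs => rw [← List.take_append_drop m
          (cs.rightInvSeq (CoxeterSystem.alternatingWord i i' (2 * m)))]
        rw [List.count_append, ← htd]
        omega
      rw [h2c]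
      push_cast
      rw [show (2 : ZMod 2) = 0 from rfl, zero_mul]
    apply Equiv.ext
    rintro ⟨t, e⟩
    rw [refbit_word_apply, hπ, hcount]
    simp

private noncomputable def etaHom : W₀ →* Equiv.Perm (W₀ × ZMod 2) :=
  cs.lift ⟨fun i => refbit cs i, refbit_liftable cs⟩

private noncomputable def eta (w t : W₀) : ZMod 2 := ((etaHom cs w) (t, 0)).2

private lemma etaHom_wordProd (ω : List B₀) :
    etaHom cs (cs.wordProd ω) = (List.map (refbit cs) ω).prod := by
  unfold CoxeterSystem.wordProd
  rw [MonoidHom.map_list_prod, List.map_map]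
  congr 1
  apply List.map_congr_left
  intro i _
  exact cs.lift_apply_simple (refbit_liftable cs) i

private lemma eta_wordProd (ω : List B₀) (t : W₀) :
    eta cs (cs.wordProd ω) t = ((cs.rightInvSeq ω).count t : ZMod 2) := by
  unfold eta
  rw [etaHom_wordProd, refbit_word_apply]
  simp

private lemma etaHom_apply (w t : W₀) (e : ZMod 2) :
    etaHom cs w (t, e) = (w * t * w⁻¹, e + eta cs w t) := by
  obtain ⟨ω, _, rfl⟩ := cs.exists_reduced_word' w
  rw [etaHom_wordProd, refbit_word_apply, eta_wordProd]

private lemma eta_mul (u v t : W₀) :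
    eta cs (u * v) t = eta cs v t + eta cs u (v * t * v⁻¹) := by
  unfold eta
  rw [map_mul, Equiv.Perm.mul_apply, etaHom_apply, etaHom_apply, etaHom_apply]
  simp [add_assoc]

private lemma eta_simple (i : B₀) (t : W₀) :
    eta cs (cs.simple i) t = if t = cs.simple i then 1 else 0 := by
  have h : cs.simple i = cs.wordProd [i] := (cs.wordProd_singleton i).symm
  rw [h, eta_wordProd, cs.rightInvSeq_singleton, ← h]
  by_cases ht : t = cs.simple i
  · rw [if_pos ht, ht]
    simp
  · rw [if_neg ht]
    have hcnt : List.count t [cs.simple i] = 0 := by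
      rw [List.count_eq_zero]
      simpa using ht
    rw [hcnt]
    simp

private lemma eta_conj (ω : List B₀) (i : B₀) :
    eta cs (cs.wordProd ω * cs.simple i * (cs.wordProd ω)⁻¹)
      (cs.wordProd ω * cs.simple i * (cs.wordProd ω)⁻¹) = 1 := by
  induction ω with
  | nil => simp [eta_simple]
  | cons j ω ih =>
      rw [cs.wordProd_cons]
      set t' := cs.wordProd ω * cs.simple i * (cs.wordProd ω)⁻¹ with ht'
      have hform : cs.simple j * cs.wordProd ω * cs.simple i
            * (cs.simple j * cs.wordProd ω)⁻¹
          = cs.simple j * (t' * cs.simple j) := by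
        rw [ht', mul_inv_rev, cs.inv_simple]
        group
      rw [hform]
      set t := cs.simple j * (t' * cs.simple j) with ht
      have h1 : eta cs (cs.simple j * (t' * cs.simple j)) t
          = eta cs (t' * cs.simple j) t
            + eta cs (cs.simple j) ((t' * cs.simple j) * t * (t' * cs.simple j)⁻¹) := by
        rw [eta_mul]
      have h2 : (t' * cs.simple j) * t * (t' * cs.simple j)⁻¹ = t' := by
        rw [ht, mul_inv_rev, cs.inv_simple]
        calc t' * cs.simple j * (cs.simple j * (t' * cs.simple j)) * (cs.simple j * t'⁻¹)
            = t' * (cs.simple j * cs.simple j) * t'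
                * ((cs.simple j * cs.simple j) * t'⁻¹) := by group
          _ = t' := by rw [cs.simple_mul_simple_self j]; group
      have h3 : eta cs (t' * cs.simple j) t
          = eta cs (cs.simple j) t + eta cs t' (cs.simple j * t * (cs.simple j)⁻¹) := by
        rw [eta_mul]
      have h4 : cs.simple j * t * (cs.simple j)⁻¹ = t' := by
        rw [ht, cs.inv_simple, ← mul_assoc, ← mul_assoc,
          cs.simple_mul_simple_self j, one_mul, mul_assoc,
          cs.simple_mul_simple_self j, mul_one]
      have h5 : (t = cs.simple j) ↔ (t' = cs.simple j) := by
        constructor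
        · intro h
          have := h4
          rw [h, cs.inv_simple, cs.simple_mul_simple_self j, one_mul] at this
          exact this.symm
        · intro h
          rw [ht, h, cs.simple_mul_simple_self j, mul_one]
      rw [h1, h3, h2, h4, eta_simple, eta_simple]
      by_cases hc : t = cs.simple j
      · rw [if_pos hc, if_pos (h5.mp hc)]
        rw [ih]
        decide
      · rw [if_neg hc, if_neg (fun hc' => hc (h5.mpr hc'))]
        rw [ih]
        decide

end Eta

section Exchange

open CoxeterSystem List Classical

variable {B₀ W₀ : Type*} [Group W₀] {M₀ : CoxeterMatrix B₀} (cs : CoxeterSystem M₀ W₀)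

private lemma eta_reflection {t : W₀} (ht : cs.IsReflection t) : eta cs t t = 1 := by
  obtain ⟨w, i, rfl⟩ := ht
  obtain ⟨ω, _, rfl⟩ := cs.exists_reduced_word' w
  exact eta_conj cs ω i

private lemma mem_ris_of_eta {ω : List B₀} {t : W₀}
    (h : eta cs (cs.wordProd ω) t = 1) : t ∈ cs.rightInvSeq ω := by
  rw [eta_wordProd] at h
  by_contra hmem
  rw [List.count_eq_zero.mpr hmem] at h
  simp at h

private lemma length_mul_lt_of_eta {w t : W₀} (h : eta cs w t = 1) :
    cs.length (w * t) < cs.length w := by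
  obtain ⟨ω, hred, rfl⟩ := cs.exists_reduced_word' w
  exact (cs.isRightInversion_of_mem_rightInvSeq hred (mem_ris_of_eta cs h)).2

private lemma eta_of_length_mul_lt {w t : W₀} (ht : cs.IsReflection t)
    (h : cs.length (w * t) < cs.length w) : eta cs w t = 1 := by
  by_contra h0
  have hv : ∀ x : ZMod 2, x ≠ 1 → x = 0 := by decide
  have h0' : eta cs w t = 0 := hv _ h0
  have hstep : eta cs (w * t) t = 1 := by
    rw [eta_mul]
    have harg : t * t * t⁻¹ = t := by rw [ht.mul_self, one_mul, ht.inv]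
    rw [harg, eta_reflection cs ht, h0', add_zero]
  have := length_mul_lt_of_eta cs hstep
  rw [mul_assoc, ht.mul_self, mul_one] at this
  omega

/-- Strong exchange property. -/
lemma strong_exchange (ω : List B₀) {t : W₀} (ht : cs.IsReflection t)
    (h : cs.length (cs.wordProd ω * t) < cs.length (cs.wordProd ω)) :
    ∃ j < ω.length, cs.wordProd ω * t = cs.wordProd (ω.eraseIdx j) := by
  have h1 := eta_of_length_mul_lt cs ht h
  have hmem := mem_ris_of_eta cs h1
  obtain ⟨j, hj, hgd⟩ := List.getElem_of_mem hmem
  refine ⟨j, by rw [← cs.length_rightInvSeq ω]; exact hj, ?_⟩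
  rw [← cs.wordProd_mul_getD_rightInvSeq ω j]
  congr 1
  rw [List.getD_eq_getElem _ 1 hj, hgd]

/-- Deletion property: every word has a reduced sublist with the same product. -/
lemma exists_reduced_sublist (ω : List B₀) :
    ∃ ρ, ρ.Sublist ω ∧ cs.IsReduced ρ ∧ cs.wordProd ρ = cs.wordProd ω := by
  generalize hn : ω.length = n
  induction n using Nat.strong_induction_on generalizing ω with
  | _ n ih =>
  by_cases hred : cs.IsReduced ω
  · exact ⟨ω, List.Sublist.refl ω, hred, rfl⟩
  · rcases List.eq_nil_or_concat ω with rfl | ⟨ω₀, c, rfl⟩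
    · exact absurd (by simp [CoxeterSystem.IsReduced]) hred
    · rw [List.concat_eq_append] at hn hred ⊢
      have hlenω : (ω₀ ++ [c]).length = ω₀.length + 1 := by simp
      by_cases hred₀ : cs.IsReduced ω₀
      · -- ω₀ reduced but ω₀ ++ [c] not; so s c is a right descent
        have hlen : cs.length (cs.wordProd ω₀ * cs.simple c)
            < cs.length (cs.wordProd ω₀) := by
          have hne := cs.length_mul_simple_ne (cs.wordProd ω₀) c
          have hle := cs.length_wordProd_le (ω₀ ++ [c])
          have hprod : cs.wordProd (ω₀ ++ [c]) = cs.wordProd ω₀ * cs.simple c := by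
            rw [cs.wordProd_append, cs.wordProd_singleton]
          have hnotred : cs.length (cs.wordProd (ω₀ ++ [c])) ≠ ω₀.length + 1 := by
            intro hc
            apply hred
            unfold CoxeterSystem.IsReduced
            rw [hc, hlenω]
          have hred₀' : cs.length (cs.wordProd ω₀) = ω₀.length := hred₀
          rw [hprod] at hle hnotred
          rw [hlenω] at hle
          have hmul := cs.length_mul_le (cs.wordProd ω₀) (cs.simple c)
          omega
        obtain ⟨j, hj, heq⟩ := strong_exchange cs ω₀ (cs.isReflection_simple c) hlen
        have hprod : cs.wordProd (ω₀ ++ [c]) = cs.wordProd (ω₀.eraseIdx j) := by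
          rw [cs.wordProd_append, cs.wordProd_singleton, heq]
        have hsub : (ω₀.eraseIdx j).Sublist (ω₀ ++ [c]) :=
          ((List.eraseIdx_sublist ω₀ j).trans (List.sublist_append_left ω₀ [c]))
        have hlt : (ω₀.eraseIdx j).length < n := by
          have h1 := List.length_eraseIdx_add_one (l := ω₀) (i := j) hj
          omega
        obtain ⟨ρ, hρ1, hρ2, hρ3⟩ := ih _ hlt (ω₀.eraseIdx j) rfl
        exact ⟨ρ, hρ1.trans hsub, hρ2, by rw [hρ3, hprod]⟩
      · -- ω₀ not reduced: first shorten ω₀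
        have hlt₀ : ω₀.length < n := by omega
        obtain ⟨ρ₀, hρ₀1, hρ₀2, hρ₀3⟩ := ih _ hlt₀ ω₀ rfl
        have hlt₁ : (ρ₀ ++ [c]).length < n := by
          have h1 : ρ₀.length ≤ ω₀.length := hρ₀1.length_le
          have h2 : ρ₀.length ≠ ω₀.length := by
            intro hc
            have := hρ₀1.eq_of_length hc
            rw [this] at hρ₀2
            exact hred₀ hρ₀2
          have h3 : (ρ₀ ++ [c]).length = ρ₀.length + 1 := by simp
          omega
        obtain ⟨ρ, hρ1, hρ2, hρ3⟩ := ih _ hlt₁ (ρ₀ ++ [c]) rfl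
        refine ⟨ρ, hρ1.trans (hρ₀1.append (List.Sublist.refl [c])), hρ2, ?_⟩
        rw [hρ3, cs.wordProd_append, cs.wordProd_append, hρ₀3]

/-- If `u ≤ v` in Bruhat order, then every reduced word for `v` has a reduced
sublist which is a word for `u`. -/
lemma exists_sublist_of_bruhatLE {u v : W₀} (h : BruhatLE cs u v) :
    ∀ ω : List B₀, cs.IsReduced ω → cs.wordProd ω = v →
      ∃ ρ, ρ.Sublist ω ∧ cs.IsReduced ρ ∧ cs.wordProd ρ = u := by
  induction h with
  | refl => exact fun ω hred hw => ⟨ω, List.Sublist.refl ω, hred, hw⟩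
  | @tail b c hab hbc ih =>
      intro ω hred hw
      obtain ⟨t, ht, rfl, hlt⟩ := hbc
      have hdown : cs.length (cs.wordProd ω * t) < cs.length (cs.wordProd ω) := by
        rw [hw]
        have : b * t * t = b := by rw [mul_assoc, ht.mul_self, mul_one]
        rw [this]
        exact hlt
      obtain ⟨j, hj, heq⟩ := strong_exchange cs ω ht hdown
      have hb : cs.wordProd (ω.eraseIdx j) = b := by
        rw [← heq, hw, mul_assoc, ht.mul_self, mul_one]
      obtain ⟨ρb, hρb1, hρb2, hρb3⟩ := exists_reduced_sublist cs (ω.eraseIdx j)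
      obtain ⟨ρ, hρ1, hρ2, hρ3⟩ := ih ρb hρb2 (by rw [hρb3, hb])
      exact ⟨ρ, (hρ1.trans hρb1).trans (List.eraseIdx_sublist ω j), hρ2, hρ3⟩

/-- Lower Bruhat sets are finite. -/
lemma finite_bruhat_le (v : W₀) : {x : W₀ | BruhatLE cs x v}.Finite := by
  obtain ⟨ω, hred, rfl⟩ := cs.exists_reduced_word' v
  apply Set.Finite.subset ((ω.sublists.toFinset.finite_toSet).image cs.wordProd)
  intro x hx
  obtain ⟨ρ, hρ1, _, hρ3⟩ := exists_sublist_of_bruhatLE cs hx ω hred rfl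
  exact ⟨ρ, by simp [List.mem_sublists, hρ1], hρ3⟩

end Exchange

section Lifting

open CoxeterSystem List Classical

variable {B₀ W₀ : Type*} [Group W₀] {M₀ : CoxeterMatrix B₀} (cs : CoxeterSystem M₀ W₀)

private lemma jointSML : ∀ v : W₀,
    (∀ ω, cs.IsReduced ω → cs.wordProd ω = v →
      ∀ ρ, ρ.Sublist ω → BruhatLE cs (cs.wordProd ρ) v)
    ∧ (∀ (i : B₀) (u : W₀), BruhatLE cs u v →
        cs.length v < cs.length (cs.simple i * v) →
        cs.length u < cs.length (cs.simple i * u) →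
        BruhatLE cs (cs.simple i * u) (cs.simple i * v))
    ∧ (∀ (i : B₀) (u : W₀), BruhatLE cs u v →
        cs.length (cs.simple i * v) < cs.length v →
        (cs.length (cs.simple i * u) < cs.length u →
          BruhatLE cs (cs.simple i * u) (cs.simple i * v))
        ∧ (cs.length u < cs.length (cs.simple i * u) →
          BruhatLE cs u (cs.simple i * v))) := by
  suffices H : ∀ n, ∀ v : W₀, cs.length v = n →
      ((∀ ω, cs.IsReduced ω → cs.wordProd ω = v →
        ∀ ρ, ρ.Sublist ω → BruhatLE cs (cs.wordProd ρ) v)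
      ∧ (∀ (i : B₀) (u : W₀), BruhatLE cs u v →
          cs.length v < cs.length (cs.simple i * v) →
          cs.length u < cs.length (cs.simple i * u) →
          BruhatLE cs (cs.simple i * u) (cs.simple i * v))
      ∧ (∀ (i : B₀) (u : W₀), BruhatLE cs u v →
          cs.length (cs.simple i * v) < cs.length v →
          (cs.length (cs.simple i * u) < cs.length u →
            BruhatLE cs (cs.simple i * u) (cs.simple i * v))
          ∧ (cs.length u < cs.length (cs.simple i * u) →
            BruhatLE cs u (cs.simple i * v)))) by
    exact fun v => H (cs.length v) v rfl
  intro n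
  induction n using Nat.strong_induction_on with
  | _ n ih =>
  intro v hv
  refine ⟨?_, ?_, ?_⟩
  · -- Statement S
    intro ω hred hw ρ hρ
    cases ω with
    | nil =>
        rw [List.sublist_nil.mp hρ]
        rw [← hw]
        exact bruhatLE_refl cs _
    | cons i ω₀ =>
        have hred₀ : cs.IsReduced ω₀ := by
          have := CoxeterSystem.IsReduced.drop (ω := i :: ω₀) hred 1
          simpa using this
        have hv₀ : cs.wordProd (i :: ω₀) = cs.simple i * cs.wordProd ω₀ :=
          cs.wordProd_cons i ω₀
        have hsiv : cs.simple i * v = cs.wordProd ω₀ := by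
          rw [← hw, hv₀, cs.simple_mul_simple_cancel_left]
        have hlv : cs.length v = ω₀.length + 1 := by
          rw [← hw]
          have : cs.length (cs.wordProd (i :: ω₀)) = (i :: ω₀).length := hred
          simpa using this
        have hlv₀ : cs.length (cs.wordProd ω₀) = ω₀.length := hred₀
        have hIH := ih ω₀.length (by omega) (cs.wordProd ω₀) hlv₀
        have hv₀v : BruhatLE cs (cs.wordProd ω₀) v := by
          rw [← hw, hv₀]
          exact bruhat_step_left cs (cs.isReflection_simple i)
            (by rw [← hv₀, hw]; omega)
        rcases List.sublist_cons_iff.mp hρ with hρ' | ⟨r, rfl, hr⟩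
        · exact bruhatLE_trans cs (hIH.1 ω₀ hred₀ rfl ρ hρ') hv₀v
        · have hur : BruhatLE cs (cs.wordProd r) (cs.wordProd ω₀) :=
            hIH.1 ω₀ hred₀ rfl r hr
          rw [cs.wordProd_cons]
          rcases cs.length_simple_mul (cs.wordProd r) i with hup | hdown
          · -- length goes up : use M at ω₀
            have hsv : cs.simple i * cs.wordProd ω₀ = v := by rw [← hw, hv₀]
            have hM := hIH.2.1 i (cs.wordProd r) hur (by rw [hsv]; omega) (by omega)
            rw [hsv] at hM
            exact hM
          · -- length goes down
            have h1 : BruhatLE cs (cs.simple i * cs.wordProd r) (cs.wordProd r) :=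
              bruhat_step_left_down cs (cs.isReflection_simple i) (by omega)
            exact bruhatLE_trans cs (bruhatLE_trans cs h1 hur) hv₀v
  · -- Statement M
    intro i u hle hv_up hu_up
    by_cases huv : u = v
    · subst huv; exact bruhatLE_refl cs _
    · rcases Relation.ReflTransGen.cases_tail hle with heq | ⟨w, huw, hwv⟩
      · exact absurd heq.symm huv
      · obtain ⟨t, ht, rfl, hlwv⟩ := hwv
        rcases cs.length_simple_mul w i with hwup | hwdown
        · -- ℓ(s i w) = ℓ w + 1
          have hIH := ih (cs.length w) (by omega) w rfl
          have h1 : BruhatLE cs (cs.simple i * u) (cs.simple i * w) :=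
            hIH.2.1 i u huw (by omega) hu_up
          have h2 : BruhatLE cs (cs.simple i * w) (cs.simple i * (w * t)) := by
            rw [← mul_assoc]
            exact bruhat_step cs ht (by
              rw [mul_assoc]
              rcases cs.length_simple_mul (w * t) i with h | h <;> omega)
          exact bruhatLE_trans cs h1 h2
        · -- ℓ(s i w) + 1 = ℓ w
          have hIHw := ih (cs.length w) (by omega) w rfl
          have h1 : BruhatLE cs u (cs.simple i * w) :=
            (hIHw.2.2 i u huw (by omega)).2 hu_up
          have hIHsw := ih (cs.length (cs.simple i * w)) (by omega) (cs.simple i * w) rfl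
          have h2 : BruhatLE cs (cs.simple i * u) w := by
            have := hIHsw.2.1 i u h1
              (by rw [cs.simple_mul_simple_cancel_left]; omega) hu_up
            rwa [cs.simple_mul_simple_cancel_left] at this
          have h3 : BruhatLE cs w (w * t) := bruhat_step cs ht hlwv
          have h4 : BruhatLE cs (w * t) (cs.simple i * (w * t)) :=
            bruhat_step_left cs (cs.isReflection_simple i) hv_up
          exact bruhatLE_trans cs (bruhatLE_trans cs h2 h3) h4
  · -- Statement L
    intro i u hle hv_down
    by_cases huv : u = v
    · subst huv
      constructor
      · intro _; exact bruhatLE_refl cs _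
      · intro h; omega
    · rcases Relation.ReflTransGen.cases_tail hle with heq | ⟨w, huw, hwv⟩
      · exact absurd heq.symm huv
      · obtain ⟨t, ht, rfl, hlwv⟩ := hwv
        rcases cs.length_simple_mul w i with hwup | hwdown
        · -- ℓ(s i w) = ℓ w + 1 : strong-exchange argument
          obtain ⟨ω, hred, hπ⟩ := cs.exists_reduced_word' (cs.simple i * (w * t))
          have hlsv : cs.length (cs.simple i * (w * t)) + 1 = cs.length (w * t) := by
            rcases cs.length_simple_mul (w * t) i with h | h <;> omega
          have hπv : cs.wordProd (i :: ω) = w * t := by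
            rw [cs.wordProd_cons, ← hπ, cs.simple_mul_simple_cancel_left]
          have hredv : cs.IsReduced (i :: ω) := by
            unfold CoxeterSystem.IsReduced
            rw [hπv]
            have h1 : cs.length (cs.simple i * (w * t)) = ω.length := by
              rw [hπ]; exact hred
            simp only [List.length_cons]
            omega
          have hdown : cs.length (cs.wordProd (i :: ω) * t) <
              cs.length (cs.wordProd (i :: ω)) := by
            rw [hπv, mul_assoc, ht.mul_self, mul_one]
            exact hlwv
          obtain ⟨j, hj, heq⟩ := strong_exchange cs (i :: ω) ht hdown
          rw [hπv, mul_assoc, ht.mul_self, mul_one] at heq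
          -- heq : w = cs.wordProd ((i :: ω).eraseIdx j)
          have hIHsv := ih (cs.length (cs.simple i * (w * t))) (by omega)
            (cs.simple i * (w * t)) rfl
          have hSsv := hIHsv.1 ω hred hπ.symm
          cases j with
          | zero =>
              simp only [List.eraseIdx_cons_zero] at heq
              -- w = π ω = s i * (w * t)
              have husv : BruhatLE cs u (cs.simple i * (w * t)) := by
                rw [hπ, ← heq]; exact huw
              constructor
              · intro hu_down
                have h1 : BruhatLE cs (cs.simple i * u) u :=
                  bruhat_step_left_down cs (cs.isReflection_simple i) hu_down
                exact bruhatLE_trans cs h1 husv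
              · intro _; exact husv
          | succ k =>
              simp only [List.eraseIdx_cons_succ] at heq
              obtain ⟨ρw, hρw_sub, hρw_red, hρw_prod⟩ :=
                exists_reduced_sublist cs (i :: ω.eraseIdx k)
              obtain ⟨ρu, hρu_sub, hρu_red, hρu_prod⟩ :=
                exists_sublist_of_bruhatLE cs huw ρw hρw_red (by rw [hρw_prod, ← heq])
              have hρu_sub' : ρu.Sublist (i :: ω) :=
                (hρu_sub.trans hρw_sub).trans
                  ((List.eraseIdx_sublist ω k).cons₂ i)
              rcases List.sublist_cons_iff.mp hρu_sub' with hρ' | ⟨r, rfl, hr⟩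
              · have husv : BruhatLE cs u (cs.simple i * (w * t)) := by
                  rw [← hρu_prod]
                  exact hSsv ρu hρ'
                constructor
                · intro hu_down
                  have h1 : BruhatLE cs (cs.simple i * u) u :=
                    bruhat_step_left_down cs (cs.isReflection_simple i) hu_down
                  exact bruhatLE_trans cs h1 husv
                · intro _; exact husv
              · -- ρu = i :: r
                have hu_eq : u = cs.simple i * cs.wordProd r := by
                  rw [← hρu_prod, cs.wordProd_cons]
                have hsiu : cs.simple i * u = cs.wordProd r := by
                  rw [hu_eq, cs.simple_mul_simple_cancel_left]
                have hlu : cs.length u = r.length + 1 := by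
                  rw [← hρu_prod]
                  have : cs.length (cs.wordProd (i :: r)) = (i :: r).length := hρu_red
                  simpa using this
                have hlsiu : cs.length (cs.simple i * u) < cs.length u := by
                  rw [hsiu]
                  have := cs.length_wordProd_le r
                  omega
                constructor
                · intro _
                  rw [hsiu]
                  exact hSsv r hr
                · intro h; omega
        · -- ℓ(s i w) + 1 = ℓ w : use IH at w
          have hIHw := ih (cs.length w) (by omega) w rfl
          have hLw := hIHw.2.2 i u huw (by omega)
          have hstep : BruhatLE cs (cs.simple i * w) (cs.simple i * (w * t)) := by
            rw [← mul_assoc]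
            exact bruhat_step cs ht (by
              rw [mul_assoc]
              rcases cs.length_simple_mul (w * t) i with h | h <;> omega)
          constructor
          · intro hu_down
            exact bruhatLE_trans cs (hLw.1 hu_down) hstep
          · intro hu_up
            exact bruhatLE_trans cs (hLw.2 hu_up) hstep

end Lifting

section RMonic

open CoxeterSystem List Polynomial Classical

variable {B₀ W₀ : Type*} [Group W₀] {M₀ : CoxeterMatrix B₀} (cs : CoxeterSystem M₀ W₀)

private lemma R_monic {Rf : W₀ → W₀ → Polynomial ℤ} (hRf : IsRFamily cs Rf) :
    ∀ v u : W₀, BruhatLE cs u v →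
      (Rf u v).Monic ∧ cs.length u + (Rf u v).natDegree = cs.length v := by
  suffices H : ∀ n, ∀ v : W₀, cs.length v = n → ∀ u, BruhatLE cs u v →
      (Rf u v).Monic ∧ cs.length u + (Rf u v).natDegree = cs.length v by
    exact fun v u h => H (cs.length v) v rfl u h
  intro n
  induction n using Nat.strong_induction_on with
  | _ n ih =>
  intro v hv u hle
  rcases Nat.eq_zero_or_pos n with hn0 | hnpos
  · -- v = 1
    have hv1 : v = 1 := cs.length_eq_zero_iff.mp (by omega)
    subst hv1
    have hu1 : u = 1 := eq_one_of_bruhatLE_one cs hle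
    subst hu1
    rw [hRf.2.1]
    exact ⟨monic_one, by rw [natDegree_one]; omega⟩
  · have hvne : v ≠ 1 := by
      intro hc; rw [hc, cs.length_one] at hv; omega
    obtain ⟨i, hdesc⟩ := cs.exists_leftDescent_of_ne_one hvne
    have hdesc' : cs.length (cs.simple i * v) < cs.length v := hdesc
    have hlv : cs.length (cs.simple i * v) + 1 = cs.length v := by
      rcases cs.length_simple_mul v i with h | h <;> omega
    have hrec := hRf.2.2 i u v hdesc'
    have hL := (jointSML cs v).2.2 i u hle hdesc'
    have hlu_le : cs.length u ≤ cs.length v := length_le_of_bruhatLE cs hle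
    rcases cs.length_simple_mul u i with hup | hdown
    · -- ℓ(s i u) = ℓ u + 1 : second recursion case
      have h2 := hrec.2 (by omega)
      have husv : BruhatLE cs u (cs.simple i * v) := hL.2 (by omega)
      obtain ⟨hm₁, hdeg₁⟩ := ih (cs.length (cs.simple i * v)) (by omega)
        (cs.simple i * v) rfl u husv
      have hXm : ((X : Polynomial ℤ) - 1).Monic := by
        have := monic_X_sub_C (1 : ℤ)
        rwa [map_one] at this
      have hp₁m : ((X - 1) * Rf u (cs.simple i * v)).Monic := hXm.mul hm₁
      have hp₁deg : ((X - 1) * Rf u (cs.simple i * v)).natDegree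
          = 1 + (Rf u (cs.simple i * v)).natDegree := by
        rw [hXm.natDegree_mul hm₁]
        congr 1
        have := natDegree_X_sub_C (1 : ℤ)
        rwa [map_one] at this
      by_cases hc : BruhatLE cs (cs.simple i * u) (cs.simple i * v)
      · obtain ⟨hm₂, hdeg₂⟩ := ih (cs.length (cs.simple i * v)) (by omega)
          (cs.simple i * v) rfl (cs.simple i * u) hc
        have hp₂m : ((X : Polynomial ℤ) * Rf (cs.simple i * u) (cs.simple i * v)).Monic :=
          monic_X.mul hm₂
        have hp₂deg : ((X : Polynomial ℤ) * Rf (cs.simple i * u) (cs.simple i * v)).natDegree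
            = 1 + (Rf (cs.simple i * u) (cs.simple i * v)).natDegree := by
          rw [monic_X.natDegree_mul hm₂, natDegree_X]
        have hdlt : ((X : Polynomial ℤ) * Rf (cs.simple i * u) (cs.simple i * v)).degree
            < ((X - 1) * Rf u (cs.simple i * v)).degree := by
          rw [degree_eq_natDegree hp₂m.ne_zero, degree_eq_natDegree hp₁m.ne_zero]
          rw [hp₁deg, hp₂deg]
          exact_mod_cast (by omega : 1 + (Rf (cs.simple i * u) (cs.simple i * v)).natDegree
            < 1 + (Rf u (cs.simple i * v)).natDegree)
        have hsum_m : (Rf u v).Monic := by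
          rw [h2]; exact hp₁m.add_of_left hdlt
        have hsum_deg : (Rf u v).natDegree
            = ((X - 1) * Rf u (cs.simple i * v)).natDegree := by
          rw [h2]
          exact natDegree_eq_of_degree_eq (degree_add_eq_left_of_degree_lt hdlt)
        refine ⟨hsum_m, ?_⟩
        rw [hsum_deg, hp₁deg]
        omega
      · have hz : Rf (cs.simple i * u) (cs.simple i * v) = 0 := hRf.1 _ _ hc
        rw [h2, hz, mul_zero, add_zero]
        exact ⟨hp₁m, by rw [hp₁deg]; omega⟩
    · -- ℓ(s i u) + 1 = ℓ u : first recursion case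
      have h1 := hrec.1 (by omega)
      have hsusv : BruhatLE cs (cs.simple i * u) (cs.simple i * v) := hL.1 (by omega)
      obtain ⟨hm, hdeg⟩ := ih (cs.length (cs.simple i * v)) (by omega)
        (cs.simple i * v) rfl (cs.simple i * u) hsusv
      rw [h1]
      exact ⟨hm, by omega⟩

end RMonic

section PolyAux

open Polynomial

private lemma reflect_sub' (p q : Polynomial ℤ) (N : ℕ) :
    (p - q).reflect N = p.reflect N - q.reflect N := by
  have hq : -q = Polynomial.C (-1) * q := by simp
  rw [sub_eq_add_neg, hq, Polynomial.reflect_add, Polynomial.reflect_C_mul]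
  simp [sub_eq_add_neg]

private lemma eq_zero_of_reflect_eq {r : Polynomial ℤ} {n : ℕ}
    (h : r.reflect n = r) (hdeg : 2 * r.natDegree < n) : r = 0 := by
  by_contra h0
  have hcoeff : r.coeff (n - r.natDegree) ≠ 0 := by
    have h1 : r.coeff (n - r.natDegree) = (r.reflect n).coeff (n - r.natDegree) := by rw [h]
    rw [h1, Polynomial.coeff_reflect, Polynomial.revAt_le (by omega : n - r.natDegree ≤ n),
      (by omega : n - (n - r.natDegree) = r.natDegree)]
    exact fun hc => h0 (Polynomial.leadingCoeff_eq_zero.mp hc)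
  have := Polynomial.le_natDegree_of_ne_zero hcoeff
  omega

end PolyAux
/-- a fully invariant collection of Bruhat intervals has
invariant Kazhdan–Lusztig polynomials `P_{y,y'}`. -/
theorem fullyInvariant_P {I : Set CoxInterval.{u}}
    (R P : ∀ i : CoxInterval.{u}, i.W → i.W → Polynomial ℤ)
    (hR : ∀ i : CoxInterval.{u}, IsRFamily i.cs (R i))
    (hP : ∀ i : CoxInterval.{u}, IsPFamily i.cs (R i) (P i))
    (hInv : FullyInvariant I R) :
    ∀ i₁ ∈ I, ∀ i₂ ∈ I, ∀ φ : i₁.W → i₂.W,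
      IsIntervalIso i₁.cs i₂.cs i₁.u i₁.v i₂.u i₂.v φ →
      ∀ y ∈ BruhatInterval i₁.cs i₁.u i₁.v,
        ∀ y' ∈ BruhatInterval i₁.cs i₁.u i₁.v,
          P i₁ y y' = P i₂ (φ y) (φ y') := by
  classical
  intro i₁ h₁ i₂ h₂ φ hφ
  suffices H : ∀ n, ∀ y ∈ BruhatInterval i₁.cs i₁.u i₁.v,
      ∀ y' ∈ BruhatInterval i₁.cs i₁.u i₁.v,
      i₁.cs.length y' ≤ i₁.cs.length y + n → P i₁ y y' = P i₂ (φ y) (φ y') by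
    intro y hy y' hy'
    exact H (i₁.cs.length y') y hy y' hy' (by omega)
  intro n
  induction n using Nat.strong_induction_on with
  | _ n ih =>
  intro y hy y' hy' hlen
  by_cases hle : BruhatLE i₁.cs y y'
  · by_cases heq : y = y'
    · subst heq
      rw [(hP i₁).2.1, (hP i₂).2.1]
    · -- main case: y < y'
      have hln₁ : i₁.cs.length y < i₁.cs.length y' :=
        length_lt_of_bruhatLT i₁.cs ⟨hle, heq⟩
      have hne₂ : φ y ≠ φ y' := fun hc => heq (hφ.1.2.1 hy hy' hc)
      have hle₂ : BruhatLE i₂.cs (φ y) (φ y') := (hφ.2 y hy y' hy').mp hle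
      have hRR : R i₁ y y' = R i₂ (φ y) (φ y') := hInv i₁ h₁ i₂ h₂ φ hφ y hy y' hy'
      obtain ⟨hm₁, hd₁⟩ := R_monic i₁.cs (hR i₁) y' y hle
      obtain ⟨hm₂, hd₂⟩ := R_monic i₂.cs (hR i₂) (φ y') (φ y) hle₂
      set d := (R i₁ y y').natDegree with hddef
      have hd₂' : i₂.cs.length (φ y) + d = i₂.cs.length (φ y') := by
        rw [hddef, hRR]; exact hd₂
      have hln₂ : i₂.cs.length (φ y) < i₂.cs.length (φ y') := by
        have hdpos : 0 < d := by omega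
        omega
      -- intervals
      set S₁ := BruhatInterval i₁.cs y y' with hS₁
      set S₂ := BruhatInterval i₂.cs (φ y) (φ y') with hS₂
      have hfin₁ : S₁.Finite :=
        (finite_bruhat_le i₁.cs y').subset (fun x hx => hx.2)
      have hfin₂ : S₂.Finite :=
        (finite_bruhat_le i₂.cs (φ y')).subset (fun x hx => hx.2)
      have hsub₁ : ∀ σ ∈ S₁, σ ∈ BruhatInterval i₁.cs i₁.u i₁.v := fun σ hσ =>
        ⟨bruhatLE_trans i₁.cs hy.1 hσ.1, bruhatLE_trans i₁.cs hσ.2 hy'.2⟩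
      have hmap : ∀ σ ∈ S₁, φ σ ∈ S₂ := fun σ hσ =>
        ⟨(hφ.2 y hy σ (hsub₁ σ hσ)).mp hσ.1, (hφ.2 σ (hsub₁ σ hσ) y' hy').mp hσ.2⟩
      have hsurj : ∀ τ ∈ S₂, ∃ σ ∈ S₁, φ σ = τ := by
        intro τ hτ
        have hτbig : τ ∈ BruhatInterval i₂.cs i₂.u i₂.v :=
          ⟨bruhatLE_trans i₂.cs (hφ.1.1 hy).1 hτ.1,
            bruhatLE_trans i₂.cs hτ.2 (hφ.1.1 hy').2⟩
        obtain ⟨σ, hσbig, rfl⟩ := hφ.1.2.2 hτbig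
        exact ⟨σ, ⟨(hφ.2 y hy σ hσbig).mpr hτ.1, (hφ.2 σ hσbig y' hy').mpr hτ.2⟩, rfl⟩
      -- convert the defining equations to finset sums
      set T₁ := hfin₁.toFinset with hT₁
      set T₂ := hfin₂.toFinset with hT₂
      have hyT₁ : y ∈ T₁ := by
        rw [hT₁, Set.Finite.mem_toFinset]
        exact ⟨bruhatLE_refl i₁.cs y, hle⟩
      have hyT₂ : φ y ∈ T₂ := by
        rw [hT₂, Set.Finite.mem_toFinset]
        exact ⟨bruhatLE_refl i₂.cs (φ y), hle₂⟩
      have E₁ : (P i₁ y y').reflect d = ∑ σ ∈ T₁, R i₁ y σ * P i₁ σ y' := by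
        have h := (hP i₁).2.2.2 y y' hle
        rw [(by omega : i₁.cs.length y' - i₁.cs.length y = d)] at h
        rw [h, ← hS₁, ← Set.Finite.coe_toFinset hfin₁, finsum_mem_coe_finset]
      have E₂ : (P i₂ (φ y) (φ y')).reflect d
          = ∑ τ ∈ T₂, R i₂ (φ y) τ * P i₂ τ (φ y') := by
        have h := (hP i₂).2.2.2 (φ y) (φ y') hle₂
        rw [(by omega : i₂.cs.length (φ y') - i₂.cs.length (φ y) = d)] at h
        rw [h, ← hS₂, ← Set.Finite.coe_toFinset hfin₂, finsum_mem_coe_finset]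
      -- split off the σ = y (resp. τ = φ y) terms
      have hsplit₁ : ∑ σ ∈ T₁, R i₁ y σ * P i₁ σ y'
          = P i₁ y y' + ∑ σ ∈ T₁.erase y, R i₁ y σ * P i₁ σ y' := by
        rw [← Finset.add_sum_erase T₁ _ hyT₁, (hR i₁).2.1, one_mul]
      have hsplit₂ : ∑ τ ∈ T₂, R i₂ (φ y) τ * P i₂ τ (φ y')
          = P i₂ (φ y) (φ y') + ∑ τ ∈ T₂.erase (φ y), R i₂ (φ y) τ * P i₂ τ (φ y') := by
        rw [← Finset.add_sum_erase T₂ _ hyT₂, (hR i₂).2.1, one_mul]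
      -- transport the remaining sums along φ
      have hnpos : 0 < n := by omega
      have herase : ∑ σ ∈ T₁.erase y, R i₁ y σ * P i₁ σ y'
          = ∑ τ ∈ T₂.erase (φ y), R i₂ (φ y) τ * P i₂ τ (φ y') := by
        refine Finset.sum_bij (fun σ _ => φ σ) ?_ ?_ ?_ ?_
        · intro σ hσ
          rw [Finset.mem_erase] at hσ ⊢
          obtain ⟨hσne, hσT⟩ := hσ
          rw [hT₁, Set.Finite.mem_toFinset] at hσT
          refine ⟨fun hc => hσne (hφ.1.2.1 (hsub₁ σ hσT) hy hc), ?_⟩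
          rw [hT₂, Set.Finite.mem_toFinset]
          exact hmap σ hσT
        · intro σ hσ σ' hσ' hc
          rw [Finset.mem_erase, hT₁, Set.Finite.mem_toFinset] at hσ hσ'
          exact hφ.1.2.1 (hsub₁ σ hσ.2) (hsub₁ σ' hσ'.2) hc
        · intro τ hτ
          rw [Finset.mem_erase, hT₂, Set.Finite.mem_toFinset] at hτ
          obtain ⟨hτne, hτS⟩ := hτ
          obtain ⟨σ, hσS, rfl⟩ := hsurj τ hτS
          refine ⟨σ, ?_, rfl⟩
          rw [Finset.mem_erase, hT₁, Set.Finite.mem_toFinset]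
          exact ⟨fun hc => hτne (by rw [hc]), hσS⟩
        · intro σ hσ
          rw [Finset.mem_erase, hT₁, Set.Finite.mem_toFinset] at hσ
          obtain ⟨hσne, hσS⟩ := hσ
          have hRpart : R i₁ y σ = R i₂ (φ y) (φ σ) :=
            hInv i₁ h₁ i₂ h₂ φ hφ y hy σ (hsub₁ σ hσS)
          have hlσ : i₁.cs.length y < i₁.cs.length σ :=
            length_lt_of_bruhatLT i₁.cs ⟨hσS.1, fun hc => hσne hc.symm⟩
          have hPpart : P i₁ σ y' = P i₂ (φ σ) (φ y') :=
            ih (n - 1) (by omega) σ (hsub₁ σ hσS) y' hy' (by omega)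
          rw [hRpart, hPpart]
      -- conclude
      have hkey : (P i₁ y y' - P i₂ (φ y) (φ y')).reflect d
          = P i₁ y y' - P i₂ (φ y) (φ y') := by
        rw [reflect_sub', E₁, E₂, hsplit₁, hsplit₂, herase]
        ring
      have hdeg₁ := (hP i₁).2.2.1 y y' ⟨hle, heq⟩
      have hdeg₂ := (hP i₂).2.2.1 (φ y) (φ y') ⟨hle₂, hne₂⟩
      have hdegsub := Polynomial.natDegree_sub_le (P i₁ y y') (P i₂ (φ y) (φ y'))
      have hzero : P i₁ y y' - P i₂ (φ y) (φ y') = 0 := by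
        apply eq_zero_of_reflect_eq hkey
        have hmax : (P i₁ y y').natDegree ⊔ (P i₂ (φ y) (φ y')).natDegree
            ≤ (d - 1) / 2 := by
          apply sup_le <;> omega
        omega
      exact sub_eq_zero.mp hzero
  · have hle₂ : ¬ BruhatLE i₂.cs (φ y) (φ y') :=
      fun hc => hle ((hφ.2 y hy y' hy').mpr hc)
    rw [(hP i₁).1 y y' hle, (hP i₂).1 _ _ hle₂]

end KL
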